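/- Let R be a group, S ⊆ R, and 1 < K < H < R subgroups such that: K is characteristic in R, K is maximal in H, K·(S \ H) = S \ H, and K·(S \ K) ≠ S \ K. Then every group automorphism of R preserving S setwise also preserves H setwise. -/
import Mathlib


open scoped Pointwise

/-- with `K` characteristic in `R`, maximal in `H`, `K(S\H) = S\H`
and `K(S\K) ≠ S\K`, every automorphism of `R` preserving `S` preserves `H`. -/
theorem stmt2 {R : Type*} [Group R] (S : Set R) (K H : Subgroup R)
    (hK : ⊥ < K) [K.Characteristic]
    (hKH : K < H) (hmax : ∀ L : Subgroup R, K < L → L ≤ H → L = H)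
    (hHR : H < ⊤)
    (h1 : (K : Set R) * (S \ (H : Set R)) = S \ (H : Set R))
    (h2 : (K : Set R) * (S \ (K : Set R)) ≠ S \ (K : Set R)) :
    ∀ φ : MulAut R, φ '' S = S → φ '' (H : Set R) = (H : Set R) := by
  -- Step 1: extract a witness from h2
  obtain ⟨k, hk, s, hs, hks⟩ :
      ∃ k ∈ (K : Set R), ∃ s ∈ S \ (K : Set R), k * s ∉ S \ (K : Set R) := by
    by_contra hcon
    push_neg at hcon
    apply h2
    apply Set.Subset.antisymm
    · rintro x ⟨k, hk, s, hs, rfl⟩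
      exact hcon k hk s hs
    · intro x hx
      exact ⟨1, K.one_mem, x, hx, one_mul x⟩
  have hsS : s ∈ S := hs.1
  have hsK : s ∉ (K : Set R) := hs.2
  have hksK : k * s ∉ (K : Set R) := by
    intro hmem
    exact hsK (by simpa using K.mul_mem (K.inv_mem hk) hmem)
  have hksS : k * s ∉ S := fun h => hks ⟨h, hksK⟩
  -- s ∈ H
  have hsH : s ∈ (H : Set R) := by
    by_contra hsH
    have : k * s ∈ S \ (H : Set R) := by
      rw [← h1]
      exact ⟨k, hk, s, ⟨hsS, hsH⟩, rfl⟩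
    exact hksS this.1
  -- key lemma: any S-preserving automorphism satisfies H ≤ H.map φ
  have key : ∀ φ : MulAut R, φ '' S = S → H ≤ H.map φ.toMonoidHom := by
    intro φ hφS
    have hKmap : K.comap φ.toMonoidHom = K := Subgroup.characteristic_iff_comap_eq.mp inferInstance φ
    have hφkK : φ k ∈ K := by
      have hKmap2 : K.comap φ.symm.toMonoidHom = K := Subgroup.characteristic_iff_comap_eq.mp inferInstance φ.symm
      rw [← hKmap2]
      simpa using hk
    -- φ s ∈ S
    have hφsS : φ s ∈ S := hφS ▸ ⟨s, hsS, rfl⟩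
    -- φ s ∈ H
    have hφsH : φ s ∈ (H : Set R) := by
      by_contra hnot
      have : φ k * φ s ∈ S \ (H : Set R) := by
        rw [← h1]
        exact ⟨φ k, hφkK, φ s, ⟨hφsS, hnot⟩, rfl⟩
      have hmul : φ (k * s) ∈ S := by rw [map_mul]; exact this.1
      rw [← hφS] at hmul
      obtain ⟨y, hy, hyeq⟩ := hmul
      exact hksS (φ.injective hyeq ▸ hy)
    -- φ s ∉ K
    have hφsK : φ s ∉ K := by
      intro hmem
      exact hsK (by rw [← hKmap]; exact hmem)
    -- the subgroup H ⊓ H.map φ strictly contains K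
    have hKle : K ≤ H ⊓ H.map φ.toMonoidHom := by
      refine le_inf hKH.le ?_
      intro x hx
      have : φ (φ.symm x) ∈ H.map φ.toMonoidHom :=
        ⟨φ.symm x, hKH.le (by rw [← hKmap]; simpa using hx), rfl⟩
      simpa using this
    have hKlt : K < H ⊓ H.map φ.toMonoidHom := by
      refine lt_of_le_of_ne hKle (fun heq => ?_)
      have : φ s ∈ H ⊓ H.map φ.toMonoidHom := ⟨hφsH, ⟨s, hsH, rfl⟩⟩
      rw [← heq] at this
      exact hφsK this
    have := hmax _ hKlt inf_le_left
    calc H = H ⊓ H.map φ.toMonoidHom := this.symm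
      _ ≤ H.map φ.toMonoidHom := inf_le_right
  -- conclude
  intro φ hφS
  have hφS' : φ.symm '' S = S := by
    conv_lhs => rw [← hφS]
    ext x
    simp
  have h1' := key φ hφS
  have h2' := key φ.symm hφS'
  have hmaple : H.map φ.toMonoidHom ≤ H := by
    rintro x ⟨h, hh, rfl⟩
    obtain ⟨y, hy, hyeq⟩ := h2' hh
    have : φ.toMonoidHom h = y := by
      have := congrArg φ hyeq
      simpa using this.symm
    rw [this]; exact hy
  have : H.map φ.toMonoidHom = H := le_antisymm hmaple (h1')
  calc φ '' (H : Set R) = (H.map φ.toMonoidHom : Set R) := by rw [Subgroup.coe_map]; rfl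
    _ = (H : Set R) := by rw [this]
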